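/- Suppose the equation a_1x_1 + ... + a_nx_n = 0 with nonzero integer coefficients is r-regular. Then every r-coloring of the positive integers admits a monochromatic solution (x_1,...,x_n) to the equation with all x_i pairwise distinct, provided n ≥ 3 and no two coordinates are forced equal by the equation (i.e., for each pair i ≠ j, the vector e_i - e_j is not a rational multiple of (a_1,...,a_n)). -/

import Mathlib

open Filter

section Aux

private lemma step1 {n r : ℕ} (a : Fin n → ℤ)
    (hreg : ∀ c : ℕ → Fin r, ∃ x : Fin n → ℕ, (∀ i, 0 < x i) ∧
      (∀ i j, c (x i) = c (x j)) ∧ ∑ i, a i * (x i : ℤ) = 0) :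
    ∃ N : ℕ, ∀ d : ℕ → Fin r, ∃ x : Fin n → ℕ, (∀ i, 0 < x i) ∧
      (∀ i j, d (x i) = d (x j)) ∧ (∑ i, a i * (x i : ℤ) = 0) ∧ (∀ i, x i ≤ N) := by
  by_contra h
  push_neg at h
  choose D hD using h
  set U : Ultrafilter ℕ := Filter.hyperfilter ℕ with hU
  have hchoice : ∀ m : ℕ, ∃ v : Fin r, {N | D N m = v} ∈ U := by
    intro m
    obtain ⟨v, hv⟩ := (U.map (fun N => D N m)).eq_pure_of_finite
    refine ⟨v, ?_⟩
    have : {v} ∈ U.map (fun N => D N m) := by rw [hv]; exact rfl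
    simpa [Ultrafilter.mem_map, Set.preimage, Set.mem_singleton_iff] using this
  choose d hd using hchoice
  obtain ⟨x, hpos, hmono, hsum⟩ := hreg d
  have hbig : {N : ℕ | ∀ i, x i ≤ N} ∈ U := by
    have : {N : ℕ | ∀ i, x i ≤ N} ⊇ {N : ℕ | ∑ i, x i ≤ N} := by
      intro N hN i
      exact le_trans (Finset.single_le_sum (fun j _ => Nat.zero_le (x j)) (Finset.mem_univ i)) hN
    refine Filter.mem_of_superset ?_ this
    have : {N : ℕ | ∑ i, x i ≤ N}ᶜ.Finite := by
      apply Set.Finite.subset (Set.finite_Iio (∑ i, x i))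
      intro N hN
      simp only [Set.mem_compl_iff, Set.mem_setOf_eq, not_le] at hN
      exact hN
    simpa using (Filter.compl_mem_hyperfilter_of_finite this)
  have hiinter : (⋂ i : Fin n, {N | D N (x i) = d (x i)}) ∈ U := by
    exact (Filter.iInter_mem).2 fun i => hd (x i)
  have hne : ((⋂ i : Fin n, {N | D N (x i) = d (x i)}) ∩ {N : ℕ | ∀ i, x i ≤ N}).Nonempty :=
    Filter.nonempty_of_mem (Filter.inter_mem hiinter hbig)
  obtain ⟨N, hN1, hN2⟩ := hne
  simp only [Set.mem_iInter, Set.mem_setOf_eq] at hN1 hN2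
  obtain ⟨i, hi⟩ := hD N x hpos (fun i j => by rw [hN1 i, hN1 j, hmono i j]) hsum
  exact absurd (hN2 i) (by omega)

private lemma affine_card (p Mn : ℕ) (t : Fin p → ℤ) (C : ℤ) (m₀ : Fin p) (ht : t m₀ ≠ 0) :
    ((Fintype.piFinset fun _ : Fin p => Finset.Icc (0:ℤ) (Mn:ℤ)).filter
      (fun lam => ∑ j, t j * lam j = C)).card ≤ (Mn+1)^(p-1) := by
  classical
  set Tgt : Finset (Fin p → ℤ) :=
    Fintype.piFinset (fun j => if j = m₀ then ({0} : Finset ℤ) else Finset.Icc (0:ℤ) (Mn:ℤ))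
    with hTgt
  have hcard : Tgt.card = (Mn+1)^(p-1) := by
    rw [hTgt, Fintype.card_piFinset]
    rw [← Finset.mul_prod_erase Finset.univ _ (Finset.mem_univ m₀)]
    simp only [if_pos rfl, Finset.card_singleton, one_mul]
    rw [Finset.prod_congr rfl (fun j hj => by
      rw [if_neg (Finset.ne_of_mem_erase hj)])]
    have h1 : (Finset.Icc (0:ℤ) (Mn:ℤ)).card = Mn+1 := by rw [Int.card_Icc]; simp
    rw [Finset.prod_const, h1, Finset.card_erase_of_mem (Finset.mem_univ m₀),
      Finset.card_univ, Fintype.card_fin]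
    simp
  rw [← hcard]
  apply Finset.card_le_card_of_injOn (fun lam => Function.update lam m₀ 0)
  · intro lam hlam
    simp only [Finset.coe_filter, Set.mem_setOf_eq, Finset.mem_filter, Fintype.mem_piFinset] at hlam
    rw [hTgt, Finset.mem_coe, Fintype.mem_piFinset]
    intro j
    by_cases hj : j = m₀
    · subst hj; simp [Function.update]
    · show _ ∈ (if j = m₀ then _ else _)
      rw [if_neg hj]
      show Function.update lam m₀ 0 j ∈ _
      rw [Function.update_of_ne hj]
      exact hlam.1 j
  · intro lam hlam lam' hlam' heq
    simp only [Finset.coe_filter, Set.mem_setOf_eq] at hlam hlam'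
    have hoff : ∀ j, j ≠ m₀ → lam j = lam' j := by
      intro j hj
      have := congrFun heq j
      simpa [Function.update_apply, if_neg hj] using this
    have hsplit : ∀ f : Fin p → ℤ, ∑ j, t j * f j
        = t m₀ * f m₀ + ∑ j ∈ Finset.univ.erase m₀, t j * f j := by
      intro f
      exact (Finset.add_sum_erase Finset.univ (fun j => t j * f j) (Finset.mem_univ m₀)).symm
    have hsame : ∑ j ∈ Finset.univ.erase m₀, t j * lam j
        = ∑ j ∈ Finset.univ.erase m₀, t j * lam' j :=
      Finset.sum_congr rfl fun j hj => by rw [hoff j (Finset.ne_of_mem_erase hj)]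
    have h1 := hlam.2
    have h2 := hlam'.2
    rw [hsplit lam, hsame] at h1
    rw [hsplit lam'] at h2
    have : t m₀ * lam m₀ = t m₀ * lam' m₀ := by omega
    have hm0 : lam m₀ = lam' m₀ := mul_left_cancel₀ ht this
    funext j
    by_cases hj : j = m₀
    · subst hj; exact hm0
    · exact hoff j hj

end Aux


theorem stmt_5 (n r : ℕ) (hn : 3 ≤ n) (a : Fin n → ℤ) (ha : ∀ i, a i ≠ 0)
    (hreg : ∀ c : ℕ → Fin r, ∃ x : Fin n → ℕ, (∀ i, 0 < x i) ∧
      (∀ i j, c (x i) = c (x j)) ∧ ∑ i, a i * (x i : ℤ) = 0)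
    (hpair : ∀ i j : Fin n, i ≠ j →
      ¬ ∃ q : ℚ, ∀ l : Fin n,
        (if l = i then (1 : ℚ) else if l = j then -1 else 0) = q * (a l : ℚ))
    (c : ℕ → Fin r) :
    ∃ x : Fin n → ℕ, (∀ i, 0 < x i) ∧ (∀ i j, c (x i) = c (x j)) ∧
      (∑ i, a i * (x i : ℤ) = 0) ∧ Function.Injective x := by
  classical
  clear hpair
  obtain ⟨m, rfl⟩ : ∃ m, n = m + 3 := ⟨n - 3, by omega⟩
  clear hn
  obtain ⟨N, hN⟩ := step1 a hreg
  choose X hX1 hX2 hX3 hX4 using fun α : ℕ => hN (fun m' => c (α * m'))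
  -- constants
  set G : ℕ := (∑ i, (a i).natAbs) * N with hG
  set Mn : ℕ := (m+3)^2 with hMn
  set K : ℕ := (m+2) * G * Mn + 1 with hK
  set L : ℕ := 2 * K with hL
  -- Gallai / van der Waerden
  set F : ℕ → Fin r × (Fin (m+3) → Fin (N+1)) := fun α =>
    (c (α * X α 0), fun i => ⟨X α i, Nat.lt_succ_of_le (hX4 α i)⟩) with hF
  obtain ⟨d₀, hd₀, e₀, pc, hP⟩ :=
    Combinatorics.exists_mono_homothetic_copy (Finset.Icc 1 L) F
  have hL1 : (1:ℕ) ∈ Finset.Icc 1 L := by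
    simp only [Finset.mem_Icc]; omega
  set κ : Fin r := pc.1 with hκ
  set w : Fin (m+3) → ℕ := fun i => X (d₀ * 1 + e₀) i with hw
  -- key facts from Gallai
  have hXeq : ∀ s ∈ Finset.Icc 1 L, ∀ i, X (d₀ * s + e₀) i = w i := by
    intro s hs i
    have h1 := hP s hs
    have h2 := hP 1 hL1
    rw [smul_eq_mul] at h1 h2
    have := congrArg Prod.snd (h1.trans h2.symm)
    have := congrFun this i
    simpa [hF, Fin.mk.injEq, hw] using this
  have hcol : ∀ s ∈ Finset.Icc 1 L, ∀ i, c ((d₀ * s + e₀) * w i) = κ := by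
    intro s hs i
    have h1 : c ((d₀ * s + e₀) * X (d₀ * s + e₀) i)
        = c ((d₀ * s + e₀) * X (d₀ * s + e₀) 0) := hX2 _ i 0
    have h2 := hP s hs
    rw [smul_eq_mul] at h2
    have h3 : c ((d₀ * s + e₀) * X (d₀ * s + e₀) 0) = κ := by
      have := congrArg Prod.fst h2
      simpa [hF, hκ] using this
    rw [hXeq s hs i] at h1
    rw [h1, h3]
  have hwpos : ∀ i, 0 < w i := fun i => hX1 _ i
  have hwN : ∀ i, w i ≤ N := fun i => hX4 _ i
  have hwsum : ∑ i, a i * (w i : ℤ) = 0 := hX3 _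
  -- γ
  set γ : Fin (m+3) → ℤ := fun i => a i * (w i : ℤ) with hγ
  have hγne : ∀ i, γ i ≠ 0 := fun i =>
    mul_ne_zero (ha i) (by exact_mod_cast (hwpos i).ne')
  have hγsum : ∑ i, γ i = 0 := hwsum
  have hγG : ∀ i, |γ i| ≤ (G:ℤ) := by
    intro i
    rw [hγ, abs_mul, Int.abs_natCast]
    have h1 : |a i| ≤ ((∑ j, (a j).natAbs : ℕ) : ℤ) := by
      rw [Int.abs_eq_natAbs]
      exact_mod_cast Finset.single_le_sum (fun j _ => Nat.zero_le ((a j).natAbs))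
        (Finset.mem_univ i)
    have h2 : ((w i : ℤ)) ≤ (N:ℤ) := by exact_mod_cast hwN i
    calc |a i| * (w i : ℤ) ≤ ((∑ j, (a j).natAbs : ℕ) : ℤ) * (N:ℤ) :=
          mul_le_mul h1 h2 (by positivity) (by positivity)
      _ = (G:ℤ) := by rw [hG]; push_cast; ring
  -- the coefficient scheme
  set ℓ : Fin (m+3) := Fin.last (m+2) with hℓ
  set sfun : (Fin (m+2) → ℤ) → Fin (m+3) → ℤ := fun lam =>
    Fin.lastCases ((K:ℤ) - ∑ j, lam j * γ j.castSucc)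
      (fun j => (K:ℤ) + γ ℓ * lam j) with hsfun_def
  set sc : Fin (m+3) → Fin (m+2) → ℤ :=
    Fin.lastCases (fun j => -γ j.castSucc)
      (fun j' => fun j => if j = j' then γ ℓ else 0) with hsc_def
  have hsfun : ∀ lam i, sfun lam i = (K:ℤ) + ∑ j, sc i j * lam j := by
    intro lam i
    induction i using Fin.lastCases with
    | last =>
      simp only [hsfun_def, hsc_def, Fin.lastCases_last]
      rw [sub_eq_add_neg, ← Finset.sum_neg_distrib]
      congr 1
      exact Finset.sum_congr rfl fun j _ => by ring
    | cast j' =>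
      simp only [hsfun_def, hsc_def, Fin.lastCases_castSucc]
      congr 1
      simp only [ite_mul, zero_mul]
      rw [Finset.sum_ite_eq' Finset.univ j' (fun j => γ ℓ * lam j)]
      simp
  -- affine form of the collision expressions
  set T : Fin (m+3) → Fin (m+3) → (Fin (m+2) → ℤ) → ℤ := fun i k lam =>
    ((d₀:ℤ) * sfun lam i + e₀) * w i - ((d₀:ℤ) * sfun lam k + e₀) * w k with hT_def
  set t : Fin (m+3) → Fin (m+3) → Fin (m+2) → ℤ := fun i k j =>
    (d₀:ℤ) * w i * sc i j - (d₀:ℤ) * w k * sc k j with ht_def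
  have hT_affine : ∀ i k lam, T i k lam
      = (∑ j, t i k j * lam j) + ((d₀:ℤ)*K + e₀) * ((w i : ℤ) - (w k : ℤ)) := by
    intro i k lam
    have h1 : ∑ j, t i k j * lam j
        = (d₀:ℤ) * w i * (∑ j, sc i j * lam j) - (d₀:ℤ) * w k * (∑ j, sc k j * lam j) := by
      rw [Finset.mul_sum, Finset.mul_sum, ← Finset.sum_sub_distrib]
      exact Finset.sum_congr rfl fun j _ => by simp only [ht_def]; ring
    simp only [hT_def]
    rw [hsfun lam i, hsfun lam k, h1]; ring
  have hd₀' : (d₀:ℤ) ≠ 0 := by exact_mod_cast hd₀.ne'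
  have hwz : ∀ i, ((w i : ℤ)) ≠ 0 := fun i => by exact_mod_cast (hwpos i).ne'
  have hscc : ∀ (j' : Fin (m+2)) (j : Fin (m+2)),
      sc j'.castSucc j = if j = j' then γ ℓ else 0 := by
    intro j' j; simp [hsc_def]
  have hscc_self : ∀ (j' : Fin (m+2)), sc j'.castSucc j' = γ ℓ := by
    intro j'; rw [hscc]; simp
  have hscc_ne : ∀ (j' j : Fin (m+2)), j ≠ j' → sc j'.castSucc j = 0 := by
    intro j' j hj; rw [hscc, if_neg hj]
  have hscl : ∀ j : Fin (m+2), sc (Fin.last (m+2)) j = -γ j.castSucc := by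
    intro j; simp [hsc_def]
  have hm₀ : ∀ i k, i ≠ k → ∃ m₀, t i k m₀ ≠ 0 := by
    intro i k hik
    rcases Fin.eq_castSucc_or_eq_last i with ⟨j₁, rfl⟩ | rfl
    · rcases Fin.eq_castSucc_or_eq_last k with ⟨j₂, rfl⟩ | rfl
      · refine ⟨j₁, ?_⟩
        have hne : j₁ ≠ j₂ := fun h => hik (by rw [h])
        have hval : t j₁.castSucc j₂.castSucc j₁ = (d₀:ℤ) * w j₁.castSucc * γ ℓ := by
          rw [ht_def]
          simp only [hscc_self j₁, hscc_ne j₂ j₁ hne]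
          ring
        rw [hval]
        exact mul_ne_zero (mul_ne_zero hd₀' (hwz _)) (hγne _)
      · obtain ⟨m₀, hm₀⟩ := exists_ne j₁
        refine ⟨m₀, ?_⟩
        have hval : t j₁.castSucc (Fin.last (m+2)) m₀
            = (d₀:ℤ) * w (Fin.last (m+2)) * γ m₀.castSucc := by
          rw [ht_def]
          simp only [hscc_ne j₁ m₀ hm₀, hscl]
          ring
        rw [hval]
        exact mul_ne_zero (mul_ne_zero hd₀' (hwz _)) (hγne _)
    · rcases Fin.eq_castSucc_or_eq_last k with ⟨j₂, rfl⟩ | rfl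
      · obtain ⟨m₀, hm₀⟩ := exists_ne j₂
        refine ⟨m₀, ?_⟩
        have hval : t (Fin.last (m+2)) j₂.castSucc m₀
            = -((d₀:ℤ) * w (Fin.last (m+2)) * γ m₀.castSucc) := by
          rw [ht_def]
          simp only [hscc_ne j₂ m₀ hm₀, hscl]
          ring
        rw [hval]
        exact neg_ne_zero.2 (mul_ne_zero (mul_ne_zero hd₀' (hwz _)) (hγne _))
      · exact absurd rfl hik
  -- box and bad sets
  set Box : Finset (Fin (m+2) → ℤ) :=
    Fintype.piFinset fun _ : Fin (m+2) => Finset.Icc (0:ℤ) (Mn:ℤ) with hBox_def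
  set pairs : Finset (Fin (m+3) × Fin (m+3)) :=
    Finset.univ.filter (fun q => q.1 ≠ q.2) with hpairs_def
  set BAD : Finset (Fin (m+2) → ℤ) :=
    pairs.biUnion (fun q => Box.filter (fun lam => T q.1 q.2 lam = 0)) with hBAD_def
  have hIcc_card : (Finset.Icc (0:ℤ) (Mn:ℤ)).card = Mn+1 := by rw [Int.card_Icc]; simp
  have hBoxcard : Box.card = (Mn+1)^(m+2) := by
    rw [hBox_def, Fintype.card_piFinset]
    simp [hIcc_card]
  have hBadcard : ∀ q ∈ pairs, (Box.filter (fun lam => T q.1 q.2 lam = 0)).card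
      ≤ (Mn+1)^(m+1) := by
    intro q hq
    have hne : q.1 ≠ q.2 := by
      have := Finset.mem_filter.1 hq
      exact this.2
    obtain ⟨m₀, hm₀⟩ := hm₀ q.1 q.2 hne
    have heq : Box.filter (fun lam => T q.1 q.2 lam = 0)
        = Box.filter (fun lam => ∑ j, t q.1 q.2 j * lam j
            = -(((d₀:ℤ)*K + e₀) * ((w q.1 : ℤ) - (w q.2 : ℤ)))) := by
      apply Finset.filter_congr
      intro lam _
      have := hT_affine q.1 q.2 lam
      constructor <;> intro h <;> linarith
    rw [heq, hBox_def]
    have := affine_card (m+2) Mn (t q.1 q.2)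
      (-(((d₀:ℤ)*K + e₀) * ((w q.1 : ℤ) - (w q.2 : ℤ)))) m₀ hm₀
    simpa using this
  have hBADlt : BAD.card < Box.card := by
    have h1 : BAD.card ≤ pairs.card * (Mn+1)^(m+1) :=
      Finset.card_biUnion_le_card_mul _ _ _ hBadcard
    have h2 : pairs.card ≤ (m+3)*(m+3) := by
      calc pairs.card ≤ (Finset.univ : Finset (Fin (m+3) × Fin (m+3))).card :=
            Finset.card_filter_le _ _
        _ = (m+3)*(m+3) := by simp
    have h3 : (m+3)*(m+3) = Mn := by rw [hMn]; ring
    have h4 : Mn * (Mn+1)^(m+1) < (Mn+1)^(m+2) := by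
      have : (Mn+1)^(m+2) = (Mn+1) * (Mn+1)^(m+1) := by ring
      rw [this]
      exact Nat.mul_lt_mul_of_lt_of_le (Nat.lt_succ_self Mn) le_rfl (by positivity)
    rw [hBoxcard]
    calc BAD.card ≤ pairs.card * (Mn+1)^(m+1) := h1
      _ ≤ Mn * (Mn+1)^(m+1) := Nat.mul_le_mul_right _ (h3 ▸ h2)
      _ < (Mn+1)^(m+2) := h4
  obtain ⟨lam, hlamBox, hlamBAD⟩ : ∃ lam ∈ Box, lam ∉ BAD := by
    by_contra h
    push_neg at h
    exact absurd (Finset.card_le_card h) (by omega)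
  have hlam0 : ∀ j, 0 ≤ lam j ∧ lam j ≤ (Mn:ℤ) := by
    intro j
    have := (Fintype.mem_piFinset.1 (hBox_def ▸ hlamBox)) j
    simpa [Finset.mem_Icc] using this
  have habs_lam : ∀ j, |lam j| ≤ (Mn:ℤ) := fun j =>
    abs_le.2 ⟨by linarith [(hlam0 j).1], (hlam0 j).2⟩
  -- range of sfun lam
  have hsK : ∀ i, |sfun lam i - K| ≤ ((m+2) * G * Mn : ℤ) := by
    intro i
    induction i using Fin.lastCases with
    | last =>
      have he : sfun lam (Fin.last (m+2)) - K = -(∑ j, lam j * γ j.castSucc) := by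
        simp [hsfun_def]
      rw [he, abs_neg]
      calc |∑ j, lam j * γ j.castSucc| ≤ ∑ j, |lam j * γ j.castSucc| :=
            Finset.abs_sum_le_sum_abs _ _
        _ ≤ ∑ _j : Fin (m+2), (Mn:ℤ) * G := by
            apply Finset.sum_le_sum
            intro j _
            rw [abs_mul]
            exact mul_le_mul (habs_lam j) (hγG _) (abs_nonneg _) (by positivity)
        _ = ((m+2) : ℤ) * ((Mn:ℤ) * G) := by
            rw [Finset.sum_const]
            simp [mul_comm]
        _ = ((m+2) * G * Mn : ℤ) := by push_cast; ring
    | cast j =>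
      have he : sfun lam j.castSucc - K = γ ℓ * lam j := by
        simp [hsfun_def]
      rw [he, abs_mul]
      have h1 : |γ ℓ| * |lam j| ≤ (G:ℤ) * Mn :=
        mul_le_mul (hγG _) (habs_lam j) (abs_nonneg _) (by positivity)
      have h2 : (G:ℤ) * Mn ≤ ((m+2) * G * Mn : ℤ) := by
        push_cast
        nlinarith [mul_nonneg (Int.natCast_nonneg G) (Int.natCast_nonneg Mn),
          Int.natCast_nonneg m, Int.natCast_nonneg G, Int.natCast_nonneg Mn]
      linarith
  have hKval : (K:ℤ) = ((m+2) * G * Mn : ℤ) + 1 := by rw [hK]; push_cast; ring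
  have hLval : (L:ℤ) = 2 * (K:ℤ) := by rw [hL]; push_cast; ring
  have hs_lb : ∀ i, 1 ≤ sfun lam i := by
    intro i
    have h := abs_le.1 (hsK i)
    omega
  have hs_ub : ∀ i, sfun lam i ≤ (L:ℤ) := by
    intro i
    have h := abs_le.1 (hsK i)
    omega
  -- the linear relation
  have hsum0 : ∑ i, γ i * sfun lam i = 0 := by
    rw [Fin.sum_univ_castSucc]
    have hel : sfun lam (Fin.last (m+2)) = (K:ℤ) - ∑ j, lam j * γ j.castSucc := by
      simp [hsfun_def]
    have hec : ∀ j : Fin (m+2), sfun lam j.castSucc = (K:ℤ) + γ ℓ * lam j := by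
      intro j; simp [hsfun_def]
    rw [hel]
    rw [Finset.sum_congr rfl (fun j _ => by rw [hec j])]
    have hexp : ∀ j : Fin (m+2), γ j.castSucc * ((K:ℤ) + γ ℓ * lam j)
        = γ j.castSucc * K + γ ℓ * (lam j * γ j.castSucc) := by intro j; ring
    rw [Finset.sum_congr rfl (fun j _ => hexp j), Finset.sum_add_distrib, ← Finset.mul_sum]
    have h2 : ∑ j : Fin (m+2), γ j.castSucc * (K:ℤ) = (∑ j : Fin (m+2), γ j.castSucc) * K :=
      (Finset.sum_mul _ _ _).symm
    have h3 : (∑ j : Fin (m+2), γ j.castSucc) + γ (Fin.last (m+2)) = 0 := by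
      rw [← Fin.sum_univ_castSucc]
      exact hγsum
    have hll : γ ℓ = γ (Fin.last (m+2)) := by rw [hℓ]
    rw [h2, hll]
    linear_combination (K:ℤ) * h3
  -- no collisions
  have hTne : ∀ i k, i ≠ k → T i k lam ≠ 0 := by
    intro i k hik h0
    apply hlamBAD
    rw [hBAD_def, Finset.mem_biUnion]
    refine ⟨(i,k), ?_, Finset.mem_filter.2 ⟨hlamBox, h0⟩⟩
    rw [hpairs_def, Finset.mem_filter]
    exact ⟨Finset.mem_univ _, hik⟩
  -- final assembly
  set σ : Fin (m+3) → ℕ := fun i => (sfun lam i).toNat with hσ_def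
  have hσcast : ∀ i, ((σ i : ℤ)) = sfun lam i := fun i =>
    Int.toNat_of_nonneg (by linarith [hs_lb i])
  have hσIcc : ∀ i, σ i ∈ Finset.Icc 1 L := by
    intro i
    rw [Finset.mem_Icc]
    constructor
    · have : (1:ℤ) ≤ (σ i : ℤ) := by rw [hσcast i]; exact hs_lb i
      exact_mod_cast this
    · have : ((σ i : ℤ)) ≤ (L:ℤ) := by rw [hσcast i]; exact hs_ub i
      exact_mod_cast this
  refine ⟨fun i => (d₀ * σ i + e₀) * w i, ?_, ?_, ?_, ?_⟩
  · intro i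
    have h1 : 1 ≤ σ i := (Finset.mem_Icc.1 (hσIcc i)).1
    have := hwpos i
    positivity
  · intro i j
    rw [hcol (σ i) (hσIcc i) i, hcol (σ j) (hσIcc j) j]
  · have hterm : ∀ i, (a i) * ((((d₀ * σ i + e₀) * w i : ℕ)) : ℤ)
        = (d₀:ℤ) * (γ i * (σ i:ℤ)) + (e₀:ℤ) * γ i := by
      intro i
      rw [hγ]
      push_cast
      ring
    rw [Finset.sum_congr rfl (fun i _ => hterm i), Finset.sum_add_distrib,
      ← Finset.mul_sum, ← Finset.mul_sum]
    have h5 : ∑ i, γ i * (σ i : ℤ) = 0 := by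
      rw [Finset.sum_congr rfl (fun i _ => by rw [hσcast i])]
      exact hsum0
    rw [h5, hγsum]
    ring
  · intro i k hik
    by_contra hne
    apply hTne i k hne
    have hik' : (d₀ * σ i + e₀) * w i = (d₀ * σ k + e₀) * w k := hik
    have hcasteq : ((((d₀ * σ i + e₀) * w i : ℕ)) : ℤ) = (((d₀ * σ k + e₀) * w k : ℕ) : ℤ) := by
      exact_mod_cast hik'
    simp only [hT_def]
    rw [← hσcast i, ← hσcast k]
    push_cast at hcasteq ⊢
    linarith
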